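/- Fix n ≥ 1 and V, η ∈ ℝⁿ, and define g : ℝⁿ → ℝ by g(p) = 2^{−1/3}(‖p‖^{4/3}‖V‖² − 4‖p‖^{−2/3}⟪p,V⟫²) for p ≠ 0. Then for every p ≠ 0, g is twice differentiable at p and its second derivative at p evaluated at (η, η) equals (2^{5/3}/3)‖p‖^{−2/3} [ ‖V‖²‖η‖² + 2‖η‖²⟪q,V⟫² − (2/3)‖V‖²⟪q,η⟫² − (16/3)⟪q,V⟫²⟪q,η⟫² − 6⟪V,η⟫² + 8⟪V,η⟫⟪q,V⟫⟪q,η⟫ ], where q := p/‖p‖. -/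

import Mathlib

open RealInnerProductSpace

noncomputable section MTWAux
open Real
variable {F : Type*} [NormedAddCommGroup F] [InnerProductSpace ℝ F]

def mtwB : F →L[ℝ] F →L[ℝ] ℝ := innerSL ℝ
@[simp] lemma mtwB_apply (x y : F) : mtwB x y = ⟪x, y⟫ := rfl

def mtwG (V : F) (q : F) : ℝ :=
  (2:ℝ)^(-(1/3:ℝ)) * ((⟪q,q⟫)^((2:ℝ)/3) * ‖V‖^2 - 4 * (⟪q,q⟫)^(-(1/3:ℝ)) * (⟪V,q⟫)^2)

def mtwC1 (V q : F) : ℝ :=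
  (2:ℝ)^(-(1/3:ℝ)) * ((4/3)*‖V‖^2*(⟪q,q⟫)^(-(1/3:ℝ)) + (8/3)*(⟪q,q⟫)^(-(4/3:ℝ))*(⟪V,q⟫)^2)

def mtwC2 (V q : F) : ℝ := -8*(2:ℝ)^(-(1/3:ℝ))*(⟪q,q⟫)^(-(1/3:ℝ))*(⟪V,q⟫)

def mtwD1 (V q : F) : F →L[ℝ] ℝ := mtwC1 V q • mtwB q + mtwC2 V q • mtwB V

lemma mtwT_hasFDerivAt (p : F) :
    HasFDerivAt (fun q : F => (⟪q,q⟫ : ℝ)) ((2:ℝ) • (mtwB p : F →L[ℝ] ℝ)) p := by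
  refine HasFDerivAt.congr_fderiv ((hasFDerivAt_id p).inner ℝ (hasFDerivAt_id p)) ?_
  ext v
  simp [mtwB, fderivInnerCLM_apply, innerSL_apply_apply, real_inner_comm]
  rw [innerSL_apply_apply]
  ring_nf

lemma mtwT_pos {p : F} (hp : p ≠ 0) : (0:ℝ) < ⟪p,p⟫ := by
  rw [real_inner_self_eq_norm_sq]; exact pow_pos (norm_pos_iff.mpr hp) 2

lemma mtwG_hasFDerivAt (V : F) {p : F} (hp : p ≠ 0) :
    HasFDerivAt (mtwG V) (mtwD1 V p) p := by
  have ht := mtwT_hasFDerivAt (F := F) p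
  have htne : (⟪p,p⟫ : ℝ) ≠ 0 := (mtwT_pos hp).ne'
  have hl : HasFDerivAt (fun q : F => (⟪V,q⟫ : ℝ)) (mtwB V) p := (mtwB V).hasFDerivAt
  have hg' := ((((ht.rpow_const (p := (2:ℝ)/3) (Or.inl htne))).mul_const (‖V‖^2)).sub
      (((ht.rpow_const (p := -(1/3:ℝ)) (Or.inl htne)).const_mul 4).mul
        (hl.mul hl))).const_mul ((2:ℝ)^(-(1/3:ℝ)))
  have e1 : ((2:ℝ)/3 - 1) = -(1/3:ℝ) := by norm_num
  have e2 : (-(1/3:ℝ) - 1) = -(4/3:ℝ) := by norm_num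
  have hfun : (fun q : F =>
      (2:ℝ)^(-(1/3:ℝ)) * ((⟪q,q⟫:ℝ)^((2:ℝ)/3) * ‖V‖^2 - 4 * (⟪q,q⟫:ℝ)^(-(1/3:ℝ)) * ((⟪V,q⟫:ℝ) * ⟪V,q⟫)))
      = mtwG V := by
    funext q; rw [mtwG]; ring
  rw [← hfun]
  refine hg'.congr_fderiv ?_
  ext v
  simp [mtwD1, mtwC1, mtwC2, e1, e2]
  ring

def mtwD2 (V p : F) : F →L[ℝ] F →L[ℝ] ℝ :=
  mtwC1 V p • (mtwB : F →L[ℝ] F →L[ℝ] ℝ)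
  + (((2:ℝ)^(-(1/3:ℝ)) * (-(8/9)*‖V‖^2*(⟪p,p⟫)^(-(4/3:ℝ)) - (64/9)*(⟪p,p⟫)^(-(7/3:ℝ))*(⟪V,p⟫)^2)) • mtwB p
      + ((2:ℝ)^(-(1/3:ℝ)) * (16/3) * (⟪p,p⟫)^(-(4/3:ℝ)) * (⟪V,p⟫)) • mtwB V).smulRight (mtwB p)
  + (((2:ℝ)^(-(1/3:ℝ)) * (16/3) * (⟪p,p⟫)^(-(4/3:ℝ)) * (⟪V,p⟫)) • mtwB p
      + (-8*(2:ℝ)^(-(1/3:ℝ)) * (⟪p,p⟫)^(-(1/3:ℝ))) • mtwB V).smulRight (mtwB V)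

lemma mtwC1_hasFDerivAt (V : F) {p : F} (hp : p ≠ 0) :
    HasFDerivAt (mtwC1 V)
      (((2:ℝ)^(-(1/3:ℝ)) * (-(8/9)*‖V‖^2*(⟪p,p⟫)^(-(4/3:ℝ)) - (64/9)*(⟪p,p⟫)^(-(7/3:ℝ))*(⟪V,p⟫)^2)) • mtwB p
        + ((2:ℝ)^(-(1/3:ℝ)) * (16/3) * (⟪p,p⟫)^(-(4/3:ℝ)) * (⟪V,p⟫)) • mtwB V) p := by
  have ht := mtwT_hasFDerivAt (F := F) p
  have htne : (⟪p,p⟫ : ℝ) ≠ 0 := (mtwT_pos hp).ne'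
  have hl : HasFDerivAt (fun q : F => (⟪V,q⟫ : ℝ)) (mtwB V) p := (mtwB V).hasFDerivAt
  have h := (((ht.rpow_const (p := -(1/3:ℝ)) (Or.inl htne)).const_mul ((4/3)*‖V‖^2)).add
      (((ht.rpow_const (p := -(4/3:ℝ)) (Or.inl htne)).const_mul (8/3)).mul
        (hl.mul hl))).const_mul ((2:ℝ)^(-(1/3:ℝ)))
  have hfun : (fun q : F => (2:ℝ)^(-(1/3:ℝ)) * ((4/3)*‖V‖^2 * (⟪q,q⟫:ℝ)^(-(1/3:ℝ))
      + 8/3 * (⟪q,q⟫:ℝ)^(-(4/3:ℝ)) * ((⟪V,q⟫:ℝ) * ⟪V,q⟫))) = mtwC1 V := by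
    funext q; rw [mtwC1]; ring
  rw [← hfun]
  refine h.congr_fderiv ?_
  have e1 : (-(1/3:ℝ) - 1) = -(4/3:ℝ) := by norm_num
  have e2 : (-(4/3:ℝ) - 1) = -(7/3:ℝ) := by norm_num
  ext v
  simp [e1, e2]
  ring

lemma mtwC2_hasFDerivAt (V : F) {p : F} (hp : p ≠ 0) :
    HasFDerivAt (mtwC2 V)
      (((2:ℝ)^(-(1/3:ℝ)) * (16/3) * (⟪p,p⟫)^(-(4/3:ℝ)) * (⟪V,p⟫)) • mtwB p
        + (-8*(2:ℝ)^(-(1/3:ℝ)) * (⟪p,p⟫)^(-(1/3:ℝ))) • mtwB V) p := by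
  have ht := mtwT_hasFDerivAt (F := F) p
  have htne : (⟪p,p⟫ : ℝ) ≠ 0 := (mtwT_pos hp).ne'
  have hl : HasFDerivAt (fun q : F => (⟪V,q⟫ : ℝ)) (mtwB V) p := (mtwB V).hasFDerivAt
  have h := (((ht.rpow_const (p := -(1/3:ℝ)) (Or.inl htne)).const_mul
      (-8*(2:ℝ)^(-(1/3:ℝ)))).mul hl)
  have hfun : (fun q : F => -8*(2:ℝ)^(-(1/3:ℝ)) * (⟪q,q⟫:ℝ)^(-(1/3:ℝ)) * (⟪V,q⟫:ℝ)) = mtwC2 V := by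
    funext q; rw [mtwC2]
  rw [← hfun]
  refine h.congr_fderiv ?_
  have e1 : (-(1/3:ℝ) - 1) = -(4/3:ℝ) := by norm_num
  ext v
  simp [e1]
  ring

lemma mtwD1_hasFDerivAt (V : F) {p : F} (hp : p ≠ 0) :
    HasFDerivAt (fun q : F => mtwD1 V q) (mtwD2 V p) p := by
  have hB : HasFDerivAt (fun q : F => (mtwB q : F →L[ℝ] ℝ)) (mtwB : F →L[ℝ] F →L[ℝ] ℝ) p :=
    (mtwB : F →L[ℝ] F →L[ℝ] ℝ).hasFDerivAt
  have h := ((mtwC1_hasFDerivAt V hp).smul hB).add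
    ((mtwC2_hasFDerivAt V hp).smul (hasFDerivAt_const (mtwB V : F →L[ℝ] ℝ) p))
  refine h.congr_fderiv ?_
  ext v w
  simp [mtwD2]

end MTWAux

/-- The central second-derivative computation of Lemma A.1: let
`g(p) = 2^{−1/3}(‖p‖^{4/3}‖V‖² − 4‖p‖^{−2/3}⟪p,V⟫²)` for `p ≠ 0` (this is the MTW matrix
of the cost `‖x − y‖⁻²` contracted twice with `V`). Then for every `p ≠ 0`, `g` is twice
differentiable at `p` and its second derivative at `p` evaluated at `(η, η)` equals
`(2^{5/3}/3)‖p‖^{−2/3}[‖V‖²‖η‖² + 2‖η‖²⟪q,V⟫² − (2/3)‖V‖²⟪q,η⟫² − (16/3)⟪q,V⟫²⟪q,η⟫²`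
`− 6⟪V,η⟫² + 8⟪V,η⟫⟪q,V⟫⟪q,η⟫]` where `q = p/‖p‖`. -/
theorem second_derivative_MTW_contraction
    (n : ℕ) (hn : 1 ≤ n) (V η : EuclideanSpace ℝ (Fin n))
    (g : EuclideanSpace ℝ (Fin n) → ℝ)
    (hg : ∀ q : EuclideanSpace ℝ (Fin n), q ≠ 0 →
      g q = (2 : ℝ) ^ (-(1 / 3 : ℝ)) *
        (‖q‖ ^ ((4 : ℝ) / 3) * ‖V‖ ^ 2 - 4 * ‖q‖ ^ (-(2 / 3 : ℝ)) * ⟪q, V⟫ ^ 2))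
    (p : EuclideanSpace ℝ (Fin n)) (hp : p ≠ 0) :
    DifferentiableAt ℝ g p ∧
    DifferentiableAt ℝ (fun q => fderiv ℝ g q) p ∧
    fderiv ℝ (fun q => fderiv ℝ g q) p η η =
      (2 : ℝ) ^ ((5 : ℝ) / 3) / 3 * ‖p‖ ^ (-(2 / 3 : ℝ)) *
        (‖V‖ ^ 2 * ‖η‖ ^ 2
          + 2 * ‖η‖ ^ 2 * ⟪‖p‖⁻¹ • p, V⟫ ^ 2
          - 2 / 3 * ‖V‖ ^ 2 * ⟪‖p‖⁻¹ • p, η⟫ ^ 2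
          - 16 / 3 * ⟪‖p‖⁻¹ • p, V⟫ ^ 2 * ⟪‖p‖⁻¹ • p, η⟫ ^ 2
          - 6 * ⟪V, η⟫ ^ 2
          + 8 * ⟪V, η⟫ * ⟪‖p‖⁻¹ • p, V⟫ * ⟪‖p‖⁻¹ • p, η⟫) := by
  have hgeq : ∀ q : EuclideanSpace ℝ (Fin n), q ≠ 0 → g q = mtwG V q := by
    intro q hq
    have hq0 : (0:ℝ) ≤ ‖q‖ := norm_nonneg q
    have h1 : (⟪q,q⟫:ℝ)^((2:ℝ)/3) = ‖q‖^((4:ℝ)/3) := by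
      rw [real_inner_self_eq_norm_sq, ← Real.rpow_natCast ‖q‖ 2, ← Real.rpow_mul hq0]
      norm_num
    have h2 : (⟪q,q⟫:ℝ)^(-(1/3:ℝ)) = ‖q‖^(-(2/3:ℝ)) := by
      rw [real_inner_self_eq_norm_sq, ← Real.rpow_natCast ‖q‖ 2, ← Real.rpow_mul hq0]
      norm_num
    rw [hg q hq, mtwG, h1, h2, real_inner_comm V q]
  have hev : ∀ q : EuclideanSpace ℝ (Fin n), q ≠ 0 → g =ᶠ[nhds q] mtwG V := by
    intro q hq
    filter_upwards [eventually_ne_nhds hq] with x hx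
    exact hgeq x hx
  have hgp : HasFDerivAt g (mtwD1 V p) p :=
    (mtwG_hasFDerivAt V hp).congr_of_eventuallyEq (hev p hp)
  have hfd : (fun q => fderiv ℝ g q) =ᶠ[nhds p] (fun q => mtwD1 V q) := by
    filter_upwards [eventually_ne_nhds hp] with q hq
    exact ((mtwG_hasFDerivAt V hq).congr_of_eventuallyEq (hev q hq)).fderiv
  have hD2 := mtwD1_hasFDerivAt V hp
  refine ⟨hgp.differentiableAt, (hfd.differentiableAt_iff).mpr hD2.differentiableAt, ?_⟩
  rw [hfd.fderiv_eq, hD2.fderiv]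
  -- now compute mtwD2 V p η η
  have hr : (0:ℝ) < ‖p‖ := norm_pos_iff.mpr hp
  have hsq : ∀ c : ℝ, ((‖p‖^2 : ℝ))^(c:ℝ) = ‖p‖^(2*c) := by
    intro c
    rw [← Real.rpow_natCast ‖p‖ 2, ← Real.rpow_mul hr.le]
    norm_num
  have hradd : ∀ c d : ℝ, ‖p‖ ^ (c:ℝ) * ‖p‖ ^ (d:ℝ) = ‖p‖ ^ (c + d) :=
    fun c d => (Real.rpow_add hr c d).symm
  have hrinv : (‖p‖⁻¹ : ℝ) = ‖p‖ ^ (-1 : ℝ) := (Real.rpow_neg_one _).symm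
  have h1 : ((⟪p,p⟫:ℝ))^(-(1/3:ℝ)) = ‖p‖^(-(2/3):ℝ) := by
    rw [real_inner_self_eq_norm_sq, hsq]; norm_num
  have h2 : ((⟪p,p⟫:ℝ))^(-(4/3:ℝ)) = ‖p‖^(-(2/3):ℝ) * (‖p‖⁻¹ * ‖p‖⁻¹) := by
    rw [real_inner_self_eq_norm_sq, hsq, hrinv, ← mul_assoc, hradd, hradd]; norm_num
  have h3 : ((⟪p,p⟫:ℝ))^(-(7/3:ℝ)) = ‖p‖^(-(2/3):ℝ) * (‖p‖⁻¹ * ‖p‖⁻¹ * (‖p‖⁻¹ * ‖p‖⁻¹)) := by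
    rw [real_inner_self_eq_norm_sq, hsq, hrinv]
    rw [show ‖p‖ ^ (-(2/3):ℝ) * (‖p‖^(-1:ℝ) * ‖p‖^(-1:ℝ) * (‖p‖^(-1:ℝ) * ‖p‖^(-1:ℝ)))
        = ((‖p‖ ^ (-(2/3):ℝ) * ‖p‖^(-1:ℝ)) * ‖p‖^(-1:ℝ) * ‖p‖^(-1:ℝ)) * ‖p‖^(-1:ℝ) by ring]
    rw [hradd, hradd, hradd, hradd]; norm_num
  have hK : (2:ℝ)^((5:ℝ)/3) = 4 * (2:ℝ)^(-(1/3:ℝ)) := by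
    rw [show ((5:ℝ)/3) = (((2:ℕ):ℝ)) + -(1/3) by norm_num,
      Real.rpow_add (by norm_num : (0:ℝ) < 2), Real.rpow_natCast]
    norm_num
  simp only [mtwD2, mtwC1, ContinuousLinearMap.add_apply, ContinuousLinearMap.smul_apply,
    ContinuousLinearMap.smulRight_apply, mtwB_apply, smul_eq_mul]
  rw [h1, h2, h3, hK, real_inner_smul_left, real_inner_smul_left,
    real_inner_self_eq_norm_sq η, real_inner_comm p V]
  ring
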